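/- Let 0 < τ_p < τ_l < τ_n, let β ∈ (τ_p/(τ_p+τ_n), 1], let k > 0, and set λ = (1/τ_p + 1/τ_l)/2. Assume additionally that λ > 1/τ_n. Then for every ω ∈ ℝ, Re G(−λ + iω, k, β) > 0, i.e. the shifted transfer function G(s − λ, k, β) is positive real on the imaginary axis. -/

import Mathlib

open Complex

/-- Open-loop transfer function of the mixed feedback amplifier. -/
noncomputable def G (τl τp τn k β : ℝ) (s : ℂ) : ℂ :=
  -(k : ℂ) * (((β * (τn + τp) - τp : ℝ) : ℂ) * s + ((2 * β - 1 : ℝ) : ℂ)) /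
    (((τl : ℂ) * s + 1) * ((τp : ℂ) * s + 1) * ((τn : ℂ) * s + 1))

set_option maxHeartbeats 1600000 in
theorem stmt4 (τl τp τn β k : ℝ)
    (hτp : 0 < τp) (hτl : τp < τl) (hτn : τl < τn)
    (hβ : β ∈ Set.Ioc (τp / (τp + τn)) 1) (hk : 0 < k)
    (hlam : 1/τn < (1/τp + 1/τl)/2) :
    ∀ ω : ℝ,
      0 < (G τl τp τn k β (-(((1/τp + 1/τl)/2 : ℝ) : ℂ) + Complex.I * (ω : ℂ))).re := by
  intro ω
  have hτl0 : 0 < τl := hτp.trans hτl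
  have hτn0 : 0 < τn := hτl0.trans hτn
  have hp' : τp ≠ 0 := ne_of_gt hτp
  have hl' : τl ≠ 0 := ne_of_gt hτl0
  have hn' : τn ≠ 0 := ne_of_gt hτn0
  obtain ⟨hβ1, hβ2⟩ := hβ
  have ha : 0 < β * (τn + τp) - τp := by
    rw [div_lt_iff₀ (by linarith)] at hβ1; nlinarith
  set L : ℝ := (1/τp + 1/τl)/2 with hLdef
  set d : ℝ := (1/τp - 1/τl)/2 with hddef
  set e : ℝ := L - 1/τn with hedef
  have hd : 0 < d := by
    have h1 : 1/τl < 1/τp := one_div_lt_one_div_of_lt hτp hτl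
    rw [hddef]; linarith
  have he : 0 < e := by rw [hedef]; linarith
  have hab : (2*β - 1) * τn ≤ β * (τn + τp) - τp := by
    nlinarith [mul_nonneg (sub_nonneg.2 hβ2) (le_of_lt (sub_pos.2 (hτl.trans hτn)))]
  have haLb : 0 < (β * (τn + τp) - τp) * L - (2*β - 1) := by
    have key : τn * ((β * (τn + τp) - τp) * L - (2*β - 1))
        = (β * (τn + τp) - τp) * (τn * e) + ((β * (τn + τp) - τp) - (2*β - 1) * τn) := by
      rw [hedef]; field_simp; ring
    nlinarith [mul_pos ha (mul_pos hτn0 he), key]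
  set s : ℂ := -(L:ℂ) + Complex.I * (ω:ℂ) with hsdef
  have hsre : s.re = -L := by simp [hsdef]
  have hsim : s.im = ω := by simp [hsdef]
  have hzre : (-(k : ℂ) * (((β * (τn + τp) - τp : ℝ) : ℂ) * s + ((2 * β - 1 : ℝ) : ℂ))).re
      = k * ((β * (τn + τp) - τp) * L - (2*β - 1)) := by
    simp only [Complex.mul_re, Complex.mul_im, Complex.add_re, Complex.add_im,
      Complex.neg_re, Complex.neg_im, Complex.ofReal_re, Complex.ofReal_im, hsre, hsim]
    ring
  have hzim : (-(k : ℂ) * (((β * (τn + τp) - τp : ℝ) : ℂ) * s + ((2 * β - 1 : ℝ) : ℂ))).im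
      = -(k * ((β * (τn + τp) - τp) * ω)) := by
    simp only [Complex.mul_re, Complex.mul_im, Complex.add_re, Complex.add_im,
      Complex.neg_re, Complex.neg_im, Complex.ofReal_re, Complex.ofReal_im, hsre, hsim]
    ring
  have hwre : ((((τl:ℂ)) * s + 1) * (((τp:ℂ)) * s + 1) * (((τn:ℂ)) * s + 1)).re
      = (τl*τp*τn) * (d^2 + ω^2) * e := by
    simp only [Complex.mul_re, Complex.mul_im, Complex.add_re, Complex.add_im,
      Complex.one_re, Complex.one_im, Complex.ofReal_re, Complex.ofReal_im, hsre, hsim]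
    rw [hedef, hddef, hLdef]; field_simp; ring
  have hwim : ((((τl:ℂ)) * s + 1) * (((τp:ℂ)) * s + 1) * (((τn:ℂ)) * s + 1)).im
      = -((τl*τp*τn) * (d^2 + ω^2) * ω) := by
    simp only [Complex.mul_re, Complex.mul_im, Complex.add_re, Complex.add_im,
      Complex.one_re, Complex.one_im, Complex.ofReal_re, Complex.ofReal_im, hsre, hsim]
    rw [hddef, hLdef]; field_simp; ring
  unfold G
  rw [Complex.div_re, Complex.normSq_apply, hzre, hzim, hwre, hwim, ← add_div]
  apply div_pos
  · have hQ : 0 < d^2 + ω^2 := by nlinarith [pow_pos hd 2, sq_nonneg ω]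
    have hT : 0 < τl*τp*τn := by positivity
    nlinarith [mul_pos (mul_pos hk haLb) (mul_pos (mul_pos hT hQ) he),
      mul_nonneg (mul_nonneg (mul_pos hk ha).le (mul_pos hT hQ).le) (sq_nonneg ω)]
  · have hQ : 0 < d^2 + ω^2 := by nlinarith [pow_pos hd 2, sq_nonneg ω]
    have hT : 0 < τl*τp*τn := by positivity
    have hP1 : 0 < (τl*τp*τn) * (d^2 + ω^2) * e := mul_pos (mul_pos hT hQ) he
    nlinarith [mul_pos hP1 hP1, mul_self_nonneg (-((τl*τp*τn) * (d^2 + ω^2) * ω))]
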